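/- Fix m ∈ ℕ and define v_m : (0,∞) → ℝ by v_m(u) = (15/16) ∫₀^π (cosh u + sinh u·cos φ)^m · sin⁵φ dφ. Then v_m is twice differentiable and v_m''(u) + 6 coth u · v_m'(u) = m(m+6)·v_m(u) for all u ∈ (0,∞). -/

import Mathlib

open Real Finset

noncomputable def Ic (k : ℕ) : ℝ :=
  ((-1 : ℝ) ^ k + 1) * (8 / (((k : ℝ) + 1) * ((k : ℝ) + 3) * ((k : ℝ) + 5)))

lemma Ic_odd {k : ℕ} (h : Odd k) : Ic k = 0 := by
  simp [Ic, Odd.neg_one_pow h]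

lemma Ic_rec (j : ℕ) : ((j : ℝ) + 7) * Ic (j + 2) = ((j : ℝ) + 1) * Ic j := by
  have h1 : ((j:ℝ)+1) ≠ 0 := by positivity
  have h3 : ((j:ℝ)+3) ≠ 0 := by positivity
  have h5 : ((j:ℝ)+5) ≠ 0 := by positivity
  have h7 : ((j:ℝ)+7) ≠ 0 := by positivity
  simp only [Ic, pow_add]
  push_cast
  field_simp
  ring

lemma hasDerivAt_anti (k : ℕ) (x : ℝ) :
    HasDerivAt (fun φ : ℝ => -cos φ ^ (k+1) / ((k:ℝ)+1) + 2 * cos φ ^ (k+3) / ((k:ℝ)+3)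
      - cos φ ^ (k+5) / ((k:ℝ)+5)) (cos x ^ k * sin x ^ 5) x := by
  have h1 : ((k:ℝ)+1) ≠ 0 := by positivity
  have h3 : ((k:ℝ)+3) ≠ 0 := by positivity
  have h5 : ((k:ℝ)+5) ≠ 0 := by positivity
  have d1 := (((Real.hasDerivAt_cos x).pow (k+1)).neg.div_const ((k:ℝ)+1))
  have d2 := (((Real.hasDerivAt_cos x).pow (k+3)).const_mul (2:ℝ)).div_const ((k:ℝ)+3)
  have d3 := (((Real.hasDerivAt_cos x).pow (k+5)).div_const ((k:ℝ)+5))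
  have := (d1.add d2).sub d3
  refine this.congr_deriv ?_
  have h5' : Real.sin x ^ 5 = Real.sin x * (1 - Real.cos x ^ 2) ^ 2 := by
    rw [← Real.sin_sq]; ring
  rw [h5']
  simp only [Nat.add_sub_cancel]
  push_cast
  field_simp
  ring

lemma integral_cos_sin5 (k : ℕ) :
    (∫ φ in (0:ℝ)..π, cos φ ^ k * sin φ ^ 5) = Ic k := by
  rw [intervalIntegral.integral_eq_sub_of_hasDerivAt (fun x _ => hasDerivAt_anti k x)
    (((Real.continuous_cos.pow k).mul (Real.continuous_sin.pow 5)).intervalIntegrable 0 π)]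
  have h1 : ((k:ℝ)+1) ≠ 0 := by positivity
  have h3 : ((k:ℝ)+3) ≠ 0 := by positivity
  have h5 : ((k:ℝ)+5) ≠ 0 := by positivity
  simp only [Real.cos_pi, Real.cos_zero, one_pow, Ic, pow_add]
  norm_num
  field_simp
  ring

/-- The analytically-continued eigenfunction
`v_m(u) = (15/16) ∫₀^π (cosh u + sinh u cos φ)^m sin⁵φ dφ`. -/
noncomputable def hyperbolicEigenfunction (m : ℕ) (u : ℝ) : ℝ :=
  (15 / 16 : ℝ) * ∫ φ in (0 : ℝ)..π,
    (Real.cosh u + Real.sinh u * Real.cos φ) ^ m * Real.sin φ ^ 5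

noncomputable def cf (m k : ℕ) : ℝ := (15/16 : ℝ) * (m.choose k) * Ic k

noncomputable def gg (p q : ℕ) (u : ℝ) : ℝ := cosh u ^ p * sinh u ^ q

noncomputable def dgg (p q : ℕ) (u : ℝ) : ℝ :=
  (p:ℝ) * gg (p-1) (q+1) u + (q:ℝ) * gg (p+1) (q-1) u

lemma hasDerivAt_gg (p q : ℕ) (u : ℝ) :
    HasDerivAt (fun u : ℝ => gg p q u) (dgg p q u) u := by
  have h := ((Real.hasDerivAt_cosh u).pow p).mul ((Real.hasDerivAt_sinh u).pow q)
  refine h.congr_deriv ?_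
  simp only [dgg, gg, Pi.pow_apply]
  ring

lemma v_rep (m : ℕ) (u : ℝ) :
    hyperbolicEigenfunction m u = ∑ k ∈ range (m+1), cf m k * gg (m-k) k u := by
  unfold hyperbolicEigenfunction
  have hpt : ∀ φ : ℝ, (cosh u + sinh u * cos φ) ^ m * sin φ ^ 5
      = ∑ k ∈ range (m+1),
          ((m.choose k : ℝ) * gg (m-k) k u) * (cos φ ^ k * sin φ ^ 5) := by
    intro φ
    rw [add_comm (cosh u), add_pow, Finset.sum_mul]
    refine Finset.sum_congr rfl fun k _ => ?_
    simp only [gg]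
    ring
  simp_rw [hpt]
  rw [intervalIntegral.integral_finset_sum (fun k _ =>
    (Continuous.intervalIntegrable (by fun_prop) 0 π))]
  simp_rw [intervalIntegral.integral_const_mul, integral_cos_sin5]
  rw [Finset.mul_sum]
  refine Finset.sum_congr rfl fun k _ => ?_
  simp only [cf]
  ring

noncomputable def vd (m : ℕ) (u : ℝ) : ℝ := ∑ k ∈ range (m+1), cf m k * dgg (m-k) k u

noncomputable def vdd (m : ℕ) (u : ℝ) : ℝ :=
  ∑ k ∈ range (m+1), cf m k *
    (((m-k : ℕ):ℝ) * dgg (m-k-1) (k+1) u + (k:ℝ) * dgg (m-k+1) (k-1) u)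

lemma hasDerivAt_v (m : ℕ) (u : ℝ) :
    HasDerivAt (hyperbolicEigenfunction m) (vd m u) u := by
  have hfe : hyperbolicEigenfunction m = fun u => ∑ k ∈ range (m+1), cf m k * gg (m-k) k u :=
    funext (v_rep m)
  rw [hfe]
  exact HasDerivAt.fun_sum fun k _ => (hasDerivAt_gg (m-k) k u).const_mul _

lemma hasDerivAt_vd (m : ℕ) (u : ℝ) :
    HasDerivAt (vd m) (vdd m u) u := by
  have hfe : vd m = fun u => ∑ k ∈ range (m+1),
      cf m k * (((m-k:ℕ):ℝ) * gg (m-k-1) (k+1) u + (k:ℝ) * gg (m-k+1) (k-1) u) := by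
    funext u
    simp only [vd, dgg]
  rw [hfe]
  exact HasDerivAt.fun_sum fun k _ =>
    (((hasDerivAt_gg (m-k-1) (k+1) u).const_mul _).add
      ((hasDerivAt_gg (m-k+1) (k-1) u).const_mul _)).const_mul _

lemma deriv_v (m : ℕ) : deriv (hyperbolicEigenfunction m) = vd m :=
  funext fun u => (hasDerivAt_v m u).deriv

-- pointwise key identity
lemma key_pt (p q : ℕ) (c s B : ℝ) (h : c ^ 2 = s ^ 2 + 1) (hB : q % 2 = 0 ∨ B = 0) :
    s * (B * ((p:ℝ) * (((p-1:ℕ):ℝ) * (c^(p-1-1) * s^(q+1+1)) + ((q+1:ℕ):ℝ) * (c^(p-1+1) * s^(q+1-1)))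
       + (q:ℝ) * (((p+1:ℕ):ℝ) * (c^(p+1-1) * s^(q-1+1)) + ((q-1:ℕ):ℝ) * (c^(p+1+1) * s^(q-1-1)))))
    + 6 * c * (B * ((p:ℝ) * (c^(p-1) * s^(q+1)) + (q:ℝ) * (c^(p+1) * s^(q-1))))
    - ((p:ℝ)+(q:ℝ)) * (((p:ℝ)+(q:ℝ))+6) * (B * (c^p * s^q)) * s
    = (q:ℝ) * ((q:ℝ)+5) * (B * (c^p * s^(q-1)))
      - (p:ℝ) * ((p-1:ℕ):ℝ) * (B * (c^(p-2) * s^(q+1))) := by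
  rcases q with _ | _ | b
  · rcases p with _ | _ | a
    · norm_num
    · norm_num; ring
    · simp only [Nat.add_sub_cancel]
      push_cast
      linear_combination (-(B*((a:ℝ)+2)*((a:ℝ)+1)*c^a*s^1)) * h
  · have hB0 : B = 0 := by
      rcases hB with h0 | h0
      · omega
      · exact h0
    rw [hB0]; ring
  · rcases p with _ | _ | a
    · simp only [Nat.zero_sub, Nat.add_sub_cancel]
      push_cast
      linear_combination (B*((b:ℝ)+2)*((b:ℝ)+7)*c^0*s^(b+1)) * h
    · simp only [Nat.sub_self, Nat.add_sub_cancel]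
      push_cast
      linear_combination (B*((b:ℝ)+2)*((b:ℝ)+7)*c^1*s^(b+1)) * h
    · simp only [Nat.add_sub_cancel]
      push_cast
      linear_combination (B*(((b:ℝ)+2)*((b:ℝ)+7)*c^(a+2)*s^(b+1) - ((a:ℝ)+2)*((a:ℝ)+1)*c^a*s^(b+3))) * h

lemma choose_shift (m j : ℕ) :
    (j+2)*(j+1)*(m.choose (j+2)) = (m-j)*(m-j-1)*(m.choose j) := by
  have e1 : m.choose (j+2) * (j+2) = m.choose (j+1) * (m - (j+1)) :=
    Nat.choose_succ_right_eq m (j+1)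
  have e2 : m.choose (j+1) * (j+1) = m.choose j * (m - j) :=
    Nat.choose_succ_right_eq m j
  calc (j+2)*(j+1)*(m.choose (j+2)) = (m.choose (j+2) * (j+2))*(j+1) := by ring
    _ = (m.choose (j+1) * (m-(j+1)))*(j+1) := by rw [e1]
    _ = (m.choose (j+1) * (j+1))*(m-(j+1)) := by ring
    _ = (m.choose j * (m-j))*(m-(j+1)) := by rw [e2]
    _ = (m-j)*(m-j-1)*(m.choose j) := by rw [← Nat.sub_sub]; ring

lemma coeff_shift (m j : ℕ) :
    ((j:ℝ)+2) * ((j:ℝ)+7) * cf m (j+2) = ((m-j:ℕ):ℝ) * ((m-j-1:ℕ):ℝ) * cf m j := by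
  apply mul_left_cancel₀ (show ((j:ℝ)+1) ≠ 0 by positivity)
  have hc := congrArg (Nat.cast : ℕ → ℝ) (choose_shift m j)
  push_cast at hc
  unfold cf
  linear_combination (15/16*((j:ℝ)+2)*((j:ℝ)+1)*(m.choose (j+2):ℝ)) * Ic_rec j
    + (15/16*(((j:ℝ)+1) * Ic j)) * hc

noncomputable def fterm (m : ℕ) (u : ℝ) (k : ℕ) : ℝ :=
  (k:ℝ) * ((k:ℝ)+5) * (cf m k * (cosh u ^ (m-k) * sinh u ^ (k-1)))

noncomputable def sterm (m : ℕ) (u : ℝ) (k : ℕ) : ℝ :=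
  ((m-k:ℕ):ℝ) * ((m-k-1:ℕ):ℝ) * (cf m k * (cosh u ^ (m-k-2) * sinh u ^ (k+1)))

lemma fterm_succ (m : ℕ) (u : ℝ) (j : ℕ) : fterm m u (j+2) = sterm m u j := by
  unfold fterm sterm
  have he1 : m - (j+2) = m - j - 2 := by omega
  have he2 : (j+2) - 1 = j+1 := rfl
  rw [he1, he2]
  have hco := coeff_shift m j
  push_cast
  linear_combination (cosh u ^ (m-j-2) * sinh u ^ (j+1)) * hco

lemma fterm_zero (m : ℕ) (u : ℝ) : fterm m u 0 = 0 := by simp [fterm]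

lemma fterm_one (m : ℕ) (u : ℝ) : fterm m u 1 = 0 := by
  have : Ic 1 = 0 := Ic_odd ⟨0, by norm_num⟩
  simp [fterm, cf, this]

lemma fterm_big (m k : ℕ) (u : ℝ) (h : m < k) : fterm m u k = 0 := by
  simp [fterm, cf, Nat.choose_eq_zero_of_lt h]

lemma sum_f_eq_sum_s (m : ℕ) (u : ℝ) :
    ∑ k ∈ range (m+1), fterm m u k = ∑ k ∈ range (m+1), sterm m u k := by
  have hext : ∑ k ∈ range (m+3), fterm m u k = ∑ k ∈ range (m+1), fterm m u k := by
    rw [show m+3 = (m+2)+1 from rfl, Finset.sum_range_succ, Finset.sum_range_succ,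
      fterm_big m (m+1) u (by omega), fterm_big m (m+2) u (by omega), add_zero, add_zero]
  rw [← hext, show m+3 = (m+2)+1 from rfl, Finset.sum_range_succ',
    show m+2 = (m+1)+1 from rfl, Finset.sum_range_succ']
  rw [show (0+1 : ℕ) = 1 from rfl, fterm_zero, fterm_one, add_zero, add_zero]
  exact Finset.sum_congr rfl fun j _ => fterm_succ m u j

/-- `v_m` is twice differentiable on `(0,∞)` and satisfies
`v_m'' + 6 coth u · v_m' = m(m+6) v_m` there. -/
theorem hyperbolicEigenfunction_ode (m : ℕ) :
    ∀ u ∈ Set.Ioi (0 : ℝ),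
      DifferentiableAt ℝ (hyperbolicEigenfunction m) u ∧
      DifferentiableAt ℝ (deriv (hyperbolicEigenfunction m)) u ∧
      deriv (deriv (hyperbolicEigenfunction m)) u
        + 6 * (Real.cosh u / Real.sinh u) * deriv (hyperbolicEigenfunction m) u
        = (m : ℝ) * ((m : ℝ) + 6) * hyperbolicEigenfunction m u := by
  intro u hu
  have hu' : (0:ℝ) < u := hu
  have hs : Real.sinh u ≠ 0 := ne_of_gt (Real.sinh_pos_iff.mpr hu')
  refine ⟨(hasDerivAt_v m u).differentiableAt, ?_, ?_⟩
  · rw [deriv_v]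
    exact (hasDerivAt_vd m u).differentiableAt
  · rw [deriv_v, (hasDerivAt_vd m u).deriv, v_rep]
    have h2 : Real.cosh u ^ 2 = Real.sinh u ^ 2 + 1 := Real.cosh_sq u
    have hz : ∑ k ∈ range (m+1), (fterm m u k - sterm m u k) = 0 := by
      rw [Finset.sum_sub_distrib, sum_f_eq_sum_s]
      ring
    have split : Real.sinh u * vdd m u + 6 * Real.cosh u * vd m u
        - (m:ℝ)*((m:ℝ)+6) * (∑ k ∈ range (m+1), cf m k * gg (m-k) k u) * Real.sinh u
        = ∑ k ∈ range (m+1), (fterm m u k - sterm m u k) := by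
      simp only [vdd, vd, gg, dgg, Finset.mul_sum, Finset.sum_mul]
      rw [← Finset.sum_add_distrib, ← Finset.sum_sub_distrib]
      refine Finset.sum_congr rfl fun k hk => ?_
      have hk' : k ≤ m := Nat.lt_succ_iff.mp (Finset.mem_range.mp hk)
      have hm : ((m-k:ℕ):ℝ) + (k:ℝ) = (m:ℝ) := by
        rw [← Nat.cast_add, Nat.sub_add_cancel hk']
      have hB : k % 2 = 0 ∨ cf m k = 0 := by
        rcases Nat.even_or_odd k with he | ho
        · exact Or.inl (Nat.even_iff.mp he)
        · exact Or.inr (by simp [cf, Ic_odd ho])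
      have hkp := key_pt (m-k) k (Real.cosh u) (Real.sinh u) (cf m k) h2 hB
      rw [hm] at hkp
      unfold fterm sterm
      linear_combination hkp
    have key : Real.sinh u * vdd m u + 6 * Real.cosh u * vd m u
        = (m:ℝ)*((m:ℝ)+6) * (∑ k ∈ range (m+1), cf m k * gg (m-k) k u) * Real.sinh u := by
      rw [hz] at split
      linarith [split]
    field_simp
    linear_combination key
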